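/- Let α ∈ (0,1) and let 𝒢₁, 𝒢₂ be comparable reconciled gene trees such that LR(𝒢₁) and LR(𝒢₂) are not isomorphic (𝒢₁ ≄_d 𝒢₂). Then PLR(𝒢₁, 𝒢₂) > 0. -/

import Mathlib

open SimpleGraph

attribute [local instance] Classical.propDecidable

/-- A rooted tree: a finite connected acyclic graph with a distinguished root. -/
structure RTree (V : Type*) [Fintype V] where
  adj : SimpleGraph V
  isTree : adj.IsTree
  root : V

variable {V : Type*} [Fintype V]

/-- `Anc T a b` : `a` is an ancestor of `b` (i.e. `b ⪯ a`), expressed as: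
`a` lies on the (unique) path from the root to `b`. -/
def Anc (T : RTree V) (a b : V) : Prop :=
  T.adj.dist T.root b = T.adj.dist T.root a + T.adj.dist a b

/-- `IsChild T c p` : `c` is a child of `p`. -/
def IsChild (T : RTree V) (c p : V) : Prop :=
  T.adj.Adj c p ∧ Anc T p c

/-- The set of children of `v`. -/
def childSet (T : RTree V) (v : V) : Set V := {c | IsChild T c v}

/-- A leaf is a node with no children. -/
def IsLeaf (T : RTree V) (v : V) : Prop := ∀ c, ¬ IsChild T c v

/-- The clade of `v`: the set of leaves descending from `v`. -/
def clade (T : RTree V) (v : V) : Set V := {x | IsLeaf T x ∧ Anc T v x}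

/-- `w` is the lowest common ancestor of the set `X` in `T`. -/
def IsLCA (T : RTree V) (X : Set V) (w : V) : Prop :=
  (∀ x ∈ X, Anc T w x) ∧ ∀ w', (∀ x ∈ X, Anc T w' x) → Anc T w' w

/-- A species tree is a rooted binary tree: every internal node has exactly two children. -/
def IsSpeciesTree (S : RTree V) : Prop :=
  ∀ v, ¬ IsLeaf S v → (childSet S v).ncard = 2

/-- Number of leaves of a rooted tree. -/
noncomputable def numLeaves (T : RTree V) : ℕ := {v | IsLeaf T v}.ncard

/-- `Hsum S` = `H(S)`: the sum of root-to-internal-node distances in `S`. -/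
noncomputable def Hsum (S : RTree V) : ℕ :=
  ∑ v : V, if IsLeaf S v then 0 else S.adj.dist S.root v

inductive Evt | dup | spec | extant
deriving DecidableEq

/-- A reconciled gene tree with species tree `S`, whose leaves are labeled bijectively by
the set of genes `Γ`. -/
structure Recon (Γ : Type*) (VG : Type*) (VS : Type*) [Fintype VG] [Fintype VS]
    (S : RTree VS) where
  tree : RTree VG
  geneLeaf : Γ → VG
  geneLeaf_inj : Function.Injective geneLeaf
  geneLeaf_range : ∀ v, IsLeaf tree v ↔ ∃ g, geneLeaf g = v
  μ : VG → VS
  lbl : VG → Evt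
  internal_children : ∀ v, ¬ IsLeaf tree v → 2 ≤ (childSet tree v).ncard
  leaf_species : ∀ v, IsLeaf tree v → IsLeaf S (μ v)
  leaf_lbl : ∀ v, IsLeaf tree v → lbl v = Evt.extant
  internal_lbl : ∀ v, ¬ IsLeaf tree v → lbl v = Evt.dup ∨ lbl v = Evt.spec
  time_consistent : ∀ a b, Anc tree a b → Anc S (μ a) (μ b)
  spec_two_children : ∀ v, lbl v = Evt.spec →
    ¬ IsLeaf S (μ v) ∧ (childSet tree v).ncard = 2
  spec_separates : ∀ v, lbl v = Evt.spec →
    ∀ v₁ v₂, IsChild tree v₁ v → IsChild tree v₂ v → v₁ ≠ v₂ →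
      ∃ s₁ s₂, IsChild S s₁ (μ v) ∧ IsChild S s₂ (μ v) ∧ s₁ ≠ s₂ ∧
        ((Anc S s₁ (μ v₁) ∧ Anc S s₂ (μ v₂)) ∨ (Anc S s₂ (μ v₁) ∧ Anc S s₁ (μ v₂)))

variable {Γ : Type*} {VS VG₁ VG₂ : Type*} [Fintype VS] [Fintype VG₁] [Fintype VG₂]
  {S : RTree VS}

/-- The clade of a gene tree node, as a set of genes. -/
def gclade (𝒢 : Recon Γ VG₁ VS S) (v : VG₁) : Set Γ :=
  {g | Anc 𝒢.tree v (𝒢.geneLeaf g)}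

/-- Two reconciled gene trees (over the same species tree and gene set) are comparable if
corresponding extant genes map to the same species. -/
def Comparable (𝒢₁ : Recon Γ VG₁ VS S) (𝒢₂ : Recon Γ VG₂ VS S) : Prop :=
  ∀ g, 𝒢₁.μ (𝒢₁.geneLeaf g) = 𝒢₂.μ (𝒢₂.geneLeaf g)

/-- `m` is the correspondence map `v ↦ lca_{G₂}(L(G₁(v)))`. -/
def IsLcaMap (𝒢₁ : Recon Γ VG₁ VS S) (𝒢₂ : Recon Γ VG₂ VS S) (m : VG₁ → VG₂) : Prop :=
  ∀ v, IsLCA 𝒢₂.tree (𝒢₂.geneLeaf '' gclade 𝒢₁ v) (m v)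

/-- `μ` is the lca-mapping: every node maps to the lca of the species of its leaf descendants. -/
def UsesLcaMapping (𝒢 : Recon Γ VG₁ VS S) : Prop :=
  ∀ v, IsLCA S (𝒢.μ '' clade 𝒢.tree v) (𝒢.μ v)

/-- The path component `d_path(𝒢₁,𝒢₂)` (with `m` the lca correspondence map). -/
noncomputable def dPath (𝒢₁ : Recon Γ VG₁ VS S) (𝒢₂ : Recon Γ VG₂ VS S)
    (m : VG₁ → VG₂) : ℕ :=
  ∑ v : VG₁, S.adj.dist (𝒢₁.μ v) (𝒢₂.μ (m v))

/-- The label component `d_lbl(𝒢₁,𝒢₂)`. -/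
noncomputable def dLbl (𝒢₁ : Recon Γ VG₁ VS S) (𝒢₂ : Recon Γ VG₂ VS S)
    (m : VG₁ → VG₂) : ℕ :=
  {v : VG₁ | 𝒢₁.lbl v ≠ 𝒢₂.lbl (m v)}.ncard

/-- The asymmetric dissimilarity `d_asym = α·d_path + (1−α)·d_lbl`. -/
noncomputable def dAsym (α : ℝ) (𝒢₁ : Recon Γ VG₁ VS S) (𝒢₂ : Recon Γ VG₂ VS S)
    (m : VG₁ → VG₂) : ℝ :=
  α * (dPath 𝒢₁ 𝒢₂ m : ℝ) + (1 - α) * (dLbl 𝒢₁ 𝒢₂ m : ℝ)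

/-- The Path-Label Reconciliation dissimilarity `PLR(𝒢₁,𝒢₂)`, where `m₁₂`, `m₂₁` are the
lca correspondence maps in the two directions. -/
noncomputable def PLR (α : ℝ) (𝒢₁ : Recon Γ VG₁ VS S) (𝒢₂ : Recon Γ VG₂ VS S)
    (m₁₂ : VG₁ → VG₂) (m₂₁ : VG₂ → VG₁) : ℝ :=
  dAsym α 𝒢₁ 𝒢₂ m₁₂ + dAsym α 𝒢₂ 𝒢₁ m₂₁

/-- An edge `uv` (with `u` the parent of `v`) is redundant if both endpoints are duplications
mapped to the same species. -/
def RedundantEdge (𝒢 : Recon Γ VG₁ VS S) (u v : VG₁) : Prop :=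
  IsChild 𝒢.tree v u ∧ 𝒢.μ u = 𝒢.μ v ∧ 𝒢.lbl u = Evt.dup ∧ 𝒢.lbl v = Evt.dup

/-- A reconciled gene tree is least duplication-resolved if it has no redundant edge. -/
def LeastDupResolved (𝒢 : Recon Γ VG₁ VS S) : Prop :=
  ∀ u v, ¬ RedundantEdge 𝒢 u v

/-- `𝒢'` is obtained from `𝒢` by contracting the edge `uv` (`u` the parent of `v`), i.e.
deleting `v` and attaching its children to `u`; `φ` is the corresponding quotient map. -/
def IsContractionOf (𝒢 : Recon Γ VG₁ VS S) (u v : VG₁) (𝒢' : Recon Γ VG₂ VS S)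
    (φ : VG₁ → VG₂) : Prop :=
  Function.Surjective φ ∧
  φ u = φ v ∧
  (∀ a b, φ a = φ b → a = b ∨ (a = u ∧ b = v) ∨ (a = v ∧ b = u)) ∧
  (∀ x y, 𝒢'.tree.adj.Adj x y ↔
    ∃ a b, φ a = x ∧ φ b = y ∧ 𝒢.tree.adj.Adj a b ∧ ¬(a = u ∧ b = v) ∧ ¬(a = v ∧ b = u)) ∧
  𝒢'.tree.root = φ 𝒢.tree.root ∧
  (∀ g, 𝒢'.geneLeaf g = φ (𝒢.geneLeaf g)) ∧
  (∀ a, 𝒢'.μ (φ a) = 𝒢.μ a) ∧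
  (∀ a, 𝒢'.lbl (φ a) = 𝒢.lbl a)

/-- Symmetrized redundancy relation on nodes. -/
def RedundantAdj (𝒢 : Recon Γ VG₁ VS S) (a b : VG₁) : Prop :=
  RedundantEdge 𝒢 a b ∨ RedundantEdge 𝒢 b a

/-- `𝒢'` is the least duplication-resolved tree `LR(𝒢)` obtained by contracting every
redundant edge of `𝒢`; `φ` is the corresponding quotient map. -/
def IsLROf (𝒢 : Recon Γ VG₁ VS S) (𝒢' : Recon Γ VG₂ VS S) (φ : VG₁ → VG₂) : Prop :=
  Function.Surjective φ ∧
  (∀ a b, φ a = φ b ↔ Relation.EqvGen (RedundantAdj 𝒢) a b) ∧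
  (∀ x y, 𝒢'.tree.adj.Adj x y ↔
    ∃ a b, φ a = x ∧ φ b = y ∧ 𝒢.tree.adj.Adj a b ∧ ¬ RedundantAdj 𝒢 a b) ∧
  𝒢'.tree.root = φ 𝒢.tree.root ∧
  (∀ g, 𝒢'.geneLeaf g = φ (𝒢.geneLeaf g)) ∧
  (∀ a, 𝒢'.μ (φ a) = 𝒢.μ a) ∧
  (∀ a, 𝒢'.lbl (φ a) = 𝒢.lbl a)

/-- Isomorphism of reconciled gene trees: a leaf-fixing bijection preserving edges,
species maps and event labels. -/
def ReconIso (𝒢₁ : Recon Γ VG₁ VS S) (𝒢₂ : Recon Γ VG₂ VS S) : Prop :=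
  ∃ φ : VG₁ ≃ VG₂,
    (∀ g, φ (𝒢₁.geneLeaf g) = 𝒢₂.geneLeaf g) ∧
    (∀ a b, 𝒢₂.tree.adj.Adj (φ a) (φ b) ↔ 𝒢₁.tree.adj.Adj a b) ∧
    (∀ v, 𝒢₂.μ (φ v) = 𝒢₁.μ v) ∧
    (∀ v, 𝒢₂.lbl (φ v) = 𝒢₁.lbl v)

/-- Exactly one gene per species: the gene set is the set of species leaves, and each gene
resides in its own species. -/
def OneGenePerSpecies (𝒢 : Recon {s : VS // IsLeaf S s} VG₁ VS S) : Prop :=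
  ∀ g, 𝒢.μ (𝒢.geneLeaf g) = g.1

namespace RTree
variable (T : RTree V)

lemma conn : T.adj.Connected := T.isTree.isConnected

lemma tri (a b c : V) : T.adj.dist a c ≤ T.adj.dist a b + T.adj.dist b c :=
  T.conn.dist_triangle

lemma dz {a b : V} (h : T.adj.dist a b = 0) : a = b := (T.conn.dist_eq_zero_iff).mp h

lemma anc_refl (a : V) : Anc T a a := by simp [Anc]

lemma anc_root (b : V) : Anc T T.root b := by simp [Anc]

lemma anc_antisymm {a b : V} (h1 : Anc T a b) (h2 : Anc T b a) : a = b := by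
  apply T.dz (a := a) (b := b)
  unfold Anc at h1 h2
  omega

lemma anc_trans {a b c : V} (h1 : Anc T a b) (h2 : Anc T b c) : Anc T a c := by
  unfold Anc at *
  have t1 := T.tri T.root a c
  have t2 := T.tri a b c
  omega

/-- a walk of length dist is a path -/
lemma isPath_of_len (x y : V) (w : T.adj.Walk x y) (h : w.length = T.adj.dist x y) :
    w.IsPath := by
  have h1 : T.adj.dist x y ≤ w.bypass.length := dist_le _
  have := w.bypass_eq_self_of_length_le (by omega)
  rw [← this]; exact w.bypass_isPath

lemma exists_geo (x y : V) : ∃ w : T.adj.Walk x y, w.IsPath ∧ w.length = T.adj.dist x y := by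
  obtain ⟨w, hw⟩ := (T.conn x y).exists_walk_length_eq_dist
  exact ⟨w, T.isPath_of_len x y w hw, hw⟩

/-- the chosen geodesic path -/
noncomputable def geo (x y : V) : T.adj.Walk x y := (T.exists_geo x y).choose

lemma geo_isPath (x y : V) : (T.geo x y).IsPath := (T.exists_geo x y).choose_spec.1
lemma geo_length (x y : V) : (T.geo x y).length = T.adj.dist x y :=
  (T.exists_geo x y).choose_spec.2

lemma path_eq {x y : V} (p q : T.adj.Walk x y) (hp : p.IsPath) (hq : q.IsPath) : p = q := by
  have := T.isTree.existsUnique_path x y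
  exact (this.unique hp hq)

/-- T5: step towards a descendant -/
lemma anc_step {a b : V} (h : Anc T a b) (hne : a ≠ b) :
    ∃ c, IsChild T c a ∧ Anc T c b ∧ T.adj.dist c b + 1 = T.adj.dist a b := by
  have hd : T.adj.dist a b ≠ 0 := fun h0 => hne (T.dz h0)
  obtain ⟨w, hw, hl⟩ := T.exists_geo a b
  cases w with
  | nil => exact absurd rfl hne
  | cons hadj w' =>
    rename_i c
    simp [SimpleGraph.Walk.length_cons] at hl
    have hcb : T.adj.dist c b ≤ w'.length := dist_le _
    have hac : T.adj.dist a c = 1 := (dist_eq_one_iff_adj).mpr hadj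
    have h1 : T.adj.dist a b ≤ T.adj.dist a c + T.adj.dist c b := T.tri a c b
    have hcb' : T.adj.dist c b + 1 = T.adj.dist a b := by omega
    have t1 : T.adj.dist T.root b ≤ T.adj.dist T.root c + T.adj.dist c b := T.tri _ c b
    have t2 : T.adj.dist T.root c ≤ T.adj.dist T.root a + T.adj.dist a c := T.tri _ a c
    unfold Anc at h
    have hrc : T.adj.dist T.root c = T.adj.dist T.root a + 1 := by omega
    refine ⟨c, ⟨hadj.symm, ?_⟩, ?_, hcb'⟩
    · unfold Anc; omega
    · unfold Anc; omega

/-- adjacency gives parent/child -/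
lemma adj_child {a b : V} (h : T.adj.Adj a b) : IsChild T b a ∨ IsChild T a b := by
  have hab : T.adj.dist a b = 1 := (dist_eq_one_iff_adj).mpr h
  have hba : T.adj.dist b a = 1 := (dist_eq_one_iff_adj).mpr h.symm
  have t1 : T.adj.dist T.root b ≤ T.adj.dist T.root a + 1 := by
    have := T.tri T.root a b; omega
  have t2 : T.adj.dist T.root a ≤ T.adj.dist T.root b + 1 := by
    have := T.tri T.root b a; omega
  rcases Nat.lt_trichotomy (T.adj.dist T.root a) (T.adj.dist T.root b) with hlt | heq | hgt
  · left; exact ⟨h.symm, by unfold Anc; omega⟩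
  · -- impossible: build two distinct paths root → b
    exfalso
    have hbs : b ∉ (T.geo T.root a).support := by
      intro hb
      have h1 := SimpleGraph.Walk.length_takeUntil_le (T.geo T.root a) hb
      have h2 : T.adj.dist T.root b ≤ ((T.geo T.root a).takeUntil b hb).length := dist_le _
      have h3 := congr_arg SimpleGraph.Walk.length ((T.geo T.root a).take_spec hb)
      rw [SimpleGraph.Walk.length_append] at h3
      have h4 : T.adj.dist b a ≤ ((T.geo T.root a).dropUntil b hb).length := dist_le _
      have h5 := T.geo_length T.root a
      omega
    have hp : ((T.geo T.root a).concat h).IsPath := by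
      rw [← SimpleGraph.Walk.isPath_reverse_iff, SimpleGraph.Walk.reverse_concat]
      rw [SimpleGraph.Walk.cons_isPath_iff]
      refine ⟨(T.geo_isPath T.root a).reverse, ?_⟩
      rw [SimpleGraph.Walk.support_reverse, List.mem_reverse]; exact hbs
    have := T.path_eq _ _ hp (T.geo_isPath T.root b)
    have hlen := congr_arg SimpleGraph.Walk.length this
    rw [SimpleGraph.Walk.length_concat, T.geo_length, T.geo_length] at hlen
    omega
  · right; exact ⟨h, by unfold Anc; omega⟩

/-- comparability of common ancestors -/
lemma anc_comp {a b x : V} (ha : Anc T a x) (hb : Anc T b x) : Anc T a b ∨ Anc T b a := by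
  -- a lies on the unique geodesic root → x
  have key : ∀ c : V, Anc T c x → c ∈ (T.geo T.root x).support := by
    intro c hc
    have happ : ((T.geo T.root c).append (T.geo c x)).length = T.adj.dist T.root x := by
      rw [SimpleGraph.Walk.length_append, T.geo_length, T.geo_length]; exact hc.symm
    have hp := T.isPath_of_len _ _ _ happ
    have := T.path_eq _ _ hp (T.geo_isPath T.root x)
    rw [← this]
    rw [SimpleGraph.Walk.mem_support_append_iff]
    left; exact SimpleGraph.Walk.end_mem_support _
  have hbsup := key b hb
  -- split geodesic at b
  set p := T.geo T.root x with hpdef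
  have hsplit := congr_arg SimpleGraph.Walk.length (p.take_spec hbsup)
  rw [SimpleGraph.Walk.length_append] at hsplit
  have htb : T.adj.dist T.root b ≤ (p.takeUntil b hbsup).length := dist_le _
  have hdb : T.adj.dist b x ≤ (p.dropUntil b hbsup).length := dist_le _
  have hplen : p.length = T.adj.dist T.root x := T.geo_length T.root x
  have htb' : (p.takeUntil b hbsup).length = T.adj.dist T.root b := by
    unfold Anc at hb; omega
  have hdb' : (p.dropUntil b hbsup).length = T.adj.dist b x := by
    unfold Anc at hb; omega
  have hasup := key a ha
  rw [← p.take_spec hbsup, SimpleGraph.Walk.mem_support_append_iff] at hasup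
  rcases hasup with h1 | h2
  · left
    set q := p.takeUntil b hbsup with hq
    have hq2 := congr_arg SimpleGraph.Walk.length (q.take_spec h1)
    rw [SimpleGraph.Walk.length_append] at hq2
    have t1 : T.adj.dist T.root a ≤ (q.takeUntil a h1).length := dist_le _
    have t2 : T.adj.dist a b ≤ (q.dropUntil a h1).length := dist_le _
    have t3 : T.adj.dist T.root b ≤ T.adj.dist T.root a + T.adj.dist a b := T.tri _ _ _
    unfold Anc; omega
  · right
    set q := p.dropUntil b hbsup with hq
    have hq2 := congr_arg SimpleGraph.Walk.length (q.take_spec h2)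
    rw [SimpleGraph.Walk.length_append] at hq2
    have t1 : T.adj.dist b a ≤ (q.takeUntil a h2).length := dist_le _
    have t2 : T.adj.dist a x ≤ (q.dropUntil a h2).length := dist_le _
    have t3 : T.adj.dist b x ≤ T.adj.dist b a + T.adj.dist a x := T.tri _ _ _
    unfold Anc at *
    have t4 : T.adj.dist T.root a ≤ T.adj.dist T.root b + T.adj.dist b a := T.tri _ _ _
    omega

/-- meet (deepest common ancestor) existence -/
lemma meet (a b : V) : ∃ z, Anc T z a ∧ Anc T z b ∧
    T.adj.dist a b = T.adj.dist a z + T.adj.dist z b := by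
  generalize hn : T.adj.dist a b = n
  induction n using Nat.strong_induction_on generalizing a b with
  | _ n ih =>
  rcases Nat.eq_zero_or_pos n with h0 | hpos
  · subst h0
    have := T.dz hn
    subst this
    exact ⟨a, T.anc_refl a, T.anc_refl a, by omega⟩
  · -- first step of geodesic a → b
    obtain ⟨w, hw, hl⟩ := T.exists_geo a b
    cases w with
    | nil =>
      rw [SimpleGraph.Walk.length_nil] at hl; omega
    | cons hadj w' =>
      rename_i c
      rw [SimpleGraph.Walk.length_cons] at hl
      have hcb : T.adj.dist c b ≤ w'.length := dist_le _
      have hac : T.adj.dist a c = 1 := (dist_eq_one_iff_adj).mpr hadj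
      have h1 : T.adj.dist a b ≤ T.adj.dist a c + T.adj.dist c b := T.tri a c b
      have hcb' : T.adj.dist c b = n - 1 := by omega
      obtain ⟨z, hz1, hz2, hz3⟩ := ih (n-1) (by omega) c b hcb'
      rcases T.adj_child hadj with hch | hch
      · -- c is a child of a: z and a both ancestors of c
        rcases hch with ⟨hadj2, hanc⟩
        rcases T.anc_comp hz1 hanc with haz | hza
        · -- Anc z a : contradiction
          exfalso
          unfold Anc at haz hz1 hanc
          have hca : T.adj.dist c a = 1 := by
            rw [SimpleGraph.dist_comm]; exact hac
          have tzc : T.adj.dist z c = T.adj.dist c z := SimpleGraph.dist_comm ..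
          have tza : T.adj.dist z a = T.adj.dist a z := SimpleGraph.dist_comm ..
          have tcz : T.adj.dist c z = T.adj.dist z c := SimpleGraph.dist_comm ..
          have tr : T.adj.dist a b ≤ T.adj.dist a z + T.adj.dist z b := T.tri _ _ _
          omega
        · -- Anc a z : then Anc a b, meet is a
          refine ⟨a, T.anc_refl a, T.anc_trans hza hz2, ?_⟩
          have : T.adj.dist a a = 0 := SimpleGraph.dist_self
          omega
      · -- c is the parent of a
        rcases hch with ⟨hadj2, hanc⟩
        refine ⟨z, T.anc_trans hz1 hanc, hz2, ?_⟩
        unfold Anc at hz1 hanc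
        have hca : T.adj.dist c a = 1 := by rw [SimpleGraph.dist_comm]; exact hac
        have h6 : T.adj.dist T.root a = T.adj.dist T.root c + 1 := by omega
        have t1 : T.adj.dist a z ≤ T.adj.dist a c + T.adj.dist c z := T.tri _ _ _
        have t2 : T.adj.dist c z ≤ T.adj.dist c a + T.adj.dist a z := T.tri _ _ _
        have tzc : T.adj.dist z c = T.adj.dist c z := SimpleGraph.dist_comm ..
        have tza : T.adj.dist z a = T.adj.dist a z := SimpleGraph.dist_comm ..
        have trb : T.adj.dist a b ≤ T.adj.dist a z + T.adj.dist z b := T.tri _ _ _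
        omega

end RTree

namespace RTree
variable {T : RTree V} (R : V → V → Prop)

/-- number of non-R edges of a walk -/
noncomputable def wcost {x y : V} (w : T.adj.Walk x y) : ℕ :=
  w.edges.countP (fun e => decide (¬ ∃ a b, e = s(a, b) ∧ R a b))

lemma wcost_nil {x : V} : wcost R (SimpleGraph.Walk.nil : T.adj.Walk x x) = 0 := by
  simp [wcost]

lemma mk_pred (hsym : ∀ a b, R a b → R b a) {a b : V} :
    (¬ ∃ a' b', s(a, b) = s(a', b') ∧ R a' b') ↔ ¬ R a b := by
  constructor
  · intro h hr; exact h ⟨a, b, rfl, hr⟩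
  · rintro h ⟨a', b', he, hr⟩
    rw [Sym2.eq_iff] at he
    rcases he with ⟨rfl, rfl⟩ | ⟨rfl, rfl⟩
    · exact h hr
    · exact h (hsym _ _ hr)

lemma wcost_cons (hsym : ∀ a b, R a b → R b a) {a b y : V} (h : T.adj.Adj a b)
    (w : T.adj.Walk b y) :
    wcost R (SimpleGraph.Walk.cons h w) = (if R a b then 0 else 1) + wcost R w := by
  unfold wcost
  rw [SimpleGraph.Walk.edges_cons, List.countP_cons]
  by_cases hr : R a b
  · have h1 : (decide (¬∃ a' b', s(a, b) = s(a', b') ∧ R a' b')) = false := by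
      rw [decide_eq_false_iff_not, not_not]
      exact ⟨a, b, rfl, hr⟩
    simp only [h1, if_pos hr, Bool.false_eq_true, if_false]
    omega
  · have h1 : (decide (¬∃ a' b', s(a, b) = s(a', b') ∧ R a' b')) = true := by
      rw [decide_eq_true_eq]
      exact (mk_pred R hsym).mpr hr
    simp only [h1, if_neg hr, if_true]
    omega

lemma wcost_append {x y z : V} (w : T.adj.Walk x y) (w' : T.adj.Walk y z) :
    wcost R (w.append w') = wcost R w + wcost R w' := by
  unfold wcost
  rw [SimpleGraph.Walk.edges_append, List.countP_append]

lemma wcost_reverse {x y : V} (w : T.adj.Walk x y) :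
    wcost R w.reverse = wcost R w := by
  unfold wcost
  rw [SimpleGraph.Walk.edges_reverse]
  exact List.reverse_perm _ |>.countP_eq _

lemma wcost_eqvgen (hsym : ∀ a b, R a b → R b a) {x y : V} (w : T.adj.Walk x y)
    (h : wcost R w = 0) : Relation.EqvGen R x y := by
  induction w with
  | nil => exact Relation.EqvGen.refl _
  | cons hadj w' ih =>
    rename_i u u₂ v
    rw [wcost_cons R hsym] at h
    by_cases hr : R u u₂
    · exact Relation.EqvGen.trans _ _ _ (Relation.EqvGen.rel _ _ hr) (ih (by omega))
    · rw [if_neg hr] at h; omega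

lemma eqvgen_walk (hsym : ∀ a b, R a b → R b a) (hRadj : ∀ a b, R a b → T.adj.Adj a b)
    {x y : V} (h : Relation.EqvGen R x y) :
    ∃ w : T.adj.Walk x y, wcost R w = 0 := by
  induction h with
  | rel a b hr =>
    refine ⟨SimpleGraph.Walk.cons (hRadj _ _ hr) SimpleGraph.Walk.nil, ?_⟩
    rw [wcost_cons R hsym, wcost_nil, if_pos hr]
  | refl a => exact ⟨SimpleGraph.Walk.nil, wcost_nil R⟩
  | symm a b _ ih =>
    obtain ⟨w, hw⟩ := ih
    exact ⟨w.reverse, by rw [wcost_reverse R]; exact hw⟩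
  | trans a b c _ _ ih1 ih2 =>
    obtain ⟨w1, hw1⟩ := ih1
    obtain ⟨w2, hw2⟩ := ih2
    exact ⟨w1.append w2, by rw [wcost_append R]; omega⟩

lemma wcost_bypass_le {x y : V} (w : T.adj.Walk x y) :
    wcost R w.bypass ≤ wcost R w := by
  unfold wcost
  apply List.Subperm.countP_le
  apply List.subperm_of_subset
  · exact (w.bypass_isPath.isTrail).edges_nodup
  · exact w.edges_bypass_subset

/-- cost of the unique path between two vertices -/
noncomputable def pcost (T : RTree V) (R : V → V → Prop) (x y : V) : ℕ :=
  wcost R (T.geo x y)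

lemma pcost_le_wcost {x y : V} (w : T.adj.Walk x y) : pcost T R x y ≤ wcost R w := by
  have : T.geo x y = w.bypass := T.path_eq _ _ (T.geo_isPath x y) w.bypass_isPath
  unfold pcost
  rw [this]
  exact wcost_bypass_le R w

lemma pcost_symm (x y : V) : pcost T R x y = pcost T R y x := by
  have : T.geo y x = (T.geo x y).reverse :=
    T.path_eq _ _ (T.geo_isPath y x) (T.geo_isPath x y).reverse
  unfold pcost
  rw [this, wcost_reverse R]

lemma pcost_add {x y z : V} (h : T.adj.dist x y = T.adj.dist x z + T.adj.dist z y) :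
    pcost T R x y = pcost T R x z + pcost T R z y := by
  have hlen : ((T.geo x z).append (T.geo z y)).length = T.adj.dist x y := by
    rw [SimpleGraph.Walk.length_append, T.geo_length, T.geo_length]; omega
  have hp := T.isPath_of_len _ _ _ hlen
  have : T.geo x y = (T.geo x z).append (T.geo z y) := T.path_eq _ _ (T.geo_isPath x y) hp
  unfold pcost
  rw [this, wcost_append R]

end RTree

section Contract
variable {V V' : Type*} [Fintype V] [Fintype V']
variable {T : RTree V} {T' : RTree V'} {R : V → V → Prop} {φ : V → V'}

def CHyp (T : RTree V) (T' : RTree V') (R : V → V → Prop) (φ : V → V') : Prop :=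
  (∀ a b, R a b → R b a) ∧ (∀ a b, R a b → T.adj.Adj a b) ∧
  (∀ a b, φ a = φ b ↔ Relation.EqvGen R a b) ∧
  (∀ x y, T'.adj.Adj x y ↔ ∃ a b, φ a = x ∧ φ b = y ∧ T.adj.Adj a b ∧ ¬ R a b) ∧
  T'.root = φ T.root

lemma proj_walk (H : CHyp T T' R φ) {x y : V} (w : T.adj.Walk x y) :
    ∃ w' : T'.adj.Walk (φ x) (φ y), w'.length = RTree.wcost R w := by
  obtain ⟨hsym, hRadj, hker, hadjiff, hroot⟩ := H
  induction w with
  | nil => exact ⟨SimpleGraph.Walk.nil, by rw [RTree.wcost_nil]; rfl⟩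
  | cons hadj w' ih =>
    rename_i a b c
    obtain ⟨w2, hw2⟩ := ih
    rw [RTree.wcost_cons R hsym]
    by_cases hr : R a b
    · have hab : φ a = φ b := (hker a b).mpr (Relation.EqvGen.rel _ _ hr)
      refine ⟨w2.copy hab.symm rfl, ?_⟩
      rw [SimpleGraph.Walk.length_copy, hw2, if_pos hr]
      omega
    · have hadj' : T'.adj.Adj (φ a) (φ b) := (hadjiff _ _).mpr ⟨a, b, rfl, rfl, hadj, hr⟩
      refine ⟨SimpleGraph.Walk.cons hadj' w2, ?_⟩
      rw [SimpleGraph.Walk.length_cons, hw2, if_neg hr]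
      omega

lemma lift_walk (H : CHyp T T' R φ) {u v : V'} (w' : T'.adj.Walk u v) :
    ∀ x y : V, φ x = u → φ y = v → ∃ w : T.adj.Walk x y, RTree.wcost R w ≤ w'.length := by
  obtain ⟨hsym, hRadj, hker, hadjiff, hroot⟩ := H
  induction w' with
  | nil =>
    intro x y hx hy
    have : Relation.EqvGen R x y := (hker x y).mp (hx.trans hy.symm)
    obtain ⟨w, hw⟩ := RTree.eqvgen_walk R hsym hRadj this
    exact ⟨w, by omega⟩
  | cons hadj w'' ih =>
    intro x y hx hy
    rename_i u u₂ v
    obtain ⟨a, b, ha, hb, hab, hnr⟩ := (hadjiff u u₂).mp hadj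
    obtain ⟨w₂, hw₂⟩ := ih b y hb hy
    have hxa : Relation.EqvGen R x a := (hker x a).mp (hx.trans ha.symm)
    obtain ⟨w₀, hw₀⟩ := RTree.eqvgen_walk R hsym hRadj hxa
    refine ⟨w₀.append (SimpleGraph.Walk.cons hab w₂), ?_⟩
    rw [RTree.wcost_append R, RTree.wcost_cons R hsym, SimpleGraph.Walk.length_cons]
    rw [if_neg hnr]
    omega

lemma dist_contract (H : CHyp T T' R φ) (x y : V) :
    T'.adj.dist (φ x) (φ y) = RTree.pcost T R x y := by
  apply le_antisymm
  · obtain ⟨w', hw'⟩ := proj_walk H (T.geo x y)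
    calc T'.adj.dist (φ x) (φ y) ≤ w'.length := SimpleGraph.dist_le _
    _ = RTree.pcost T R x y := hw'
  · obtain ⟨w', hw'⟩ := (T'.conn (φ x) (φ y)).exists_walk_length_eq_dist
    obtain ⟨w, hw⟩ := lift_walk H w' x y rfl rfl
    calc RTree.pcost T R x y ≤ RTree.wcost R w := RTree.pcost_le_wcost R w
    _ ≤ w'.length := hw
    _ = _ := hw'

lemma anc_push (H : CHyp T T' R φ) {x y : V} (h : Anc T x y) : Anc T' (φ x) (φ y) := by
  unfold Anc at h ⊢
  rw [H.2.2.2.2]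
  rw [dist_contract H, dist_contract H, dist_contract H]
  exact RTree.pcost_add R h

lemma anc_pull (H : CHyp T T' R φ) {x y : V} (h : Anc T' (φ x) (φ y)) :
    ∃ x', Relation.EqvGen R x x' ∧ Anc T x' y := by
  obtain ⟨z, hz1, hz2, hz3⟩ := T.meet x y
  unfold Anc at h hz1 hz2
  rw [H.2.2.2.2, dist_contract H, dist_contract H, dist_contract H] at h
  have e1 : RTree.pcost T R T.root x = RTree.pcost T R T.root z + RTree.pcost T R z x :=
    RTree.pcost_add R hz1
  have e2 : RTree.pcost T R T.root y = RTree.pcost T R T.root z + RTree.pcost T R z y :=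
    RTree.pcost_add R hz2
  have e3 : RTree.pcost T R x y = RTree.pcost T R x z + RTree.pcost T R z y :=
    RTree.pcost_add R hz3
  have e4 : RTree.pcost T R x z = RTree.pcost T R z x := RTree.pcost_symm R x z
  have hzx : RTree.pcost T R z x = 0 := by omega
  have : Relation.EqvGen R z x := RTree.wcost_eqvgen R H.1 _ hzx
  exact ⟨z, Relation.EqvGen.symm _ _ this, by unfold Anc; omega⟩

end Contract


section ReconLemmas
variable {Γ : Type*} {VS VG₁ VG₂ : Type*} [Fintype VS] [Fintype VG₁] [Fintype VG₂]
  {S : RTree VS}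

/-- a leaf has no strict descendants -/
lemma leaf_anc_eq {V : Type*} [Fintype V] {T : RTree V} {v x : V}
    (hl : IsLeaf T v) (h : Anc T v x) : x = v := by
  by_contra hne
  obtain ⟨c, hc, -⟩ := T.anc_step h (fun he => hne he.symm)
  exact hl c hc

/-- covering characterization of children -/
lemma child_iff_cov {V : Type*} [Fintype V] (T : RTree V) (x y : V) :
    IsChild T y x ↔ (Anc T x y ∧ x ≠ y ∧ ∀ z, Anc T x z → Anc T z y → z = x ∨ z = y) := by
  constructor
  · rintro ⟨hadj, hanc⟩
    have hxy : T.adj.dist x y = 1 := (dist_eq_one_iff_adj).mpr hadj.symm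
    refine ⟨hanc, fun he => (T.adj.loopless.irrefl y (he ▸ hadj)), fun z hz1 hz2 => ?_⟩
    unfold Anc at hanc hz1 hz2
    have h1 : T.adj.dist x z + T.adj.dist z y = 1 := by omega
    rcases Nat.eq_zero_or_pos (T.adj.dist x z) with h0 | hp
    · left; exact (T.dz h0).symm
    · right; exact T.dz (by omega)
  · rintro ⟨hanc, hne, hmin⟩
    obtain ⟨c, hc, hcb, -⟩ := T.anc_step hanc hne
    have : c = x ∨ c = y := hmin c hc.2 hcb
    rcases this with rfl | rfl
    · exact absurd rfl (T.adj.ne_of_adj hc.1)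
    · exact hc

lemma adj_iff_children {V : Type*} [Fintype V] (T : RTree V) (x y : V) :
    T.adj.Adj x y ↔ IsChild T y x ∨ IsChild T x y := by
  constructor
  · exact T.adj_child
  · rintro (⟨h, -⟩ | ⟨h, -⟩)
    · exact h.symm
    · exact h

variable (𝒢 : Recon Γ VG₁ VS S)

/-- every vertex has a leaf descendant -/
lemma leaf_desc (v : VG₁) : ∃ g, Anc 𝒢.tree v (𝒢.geneLeaf g) := by
  generalize hn : Fintype.card VG₁ - 𝒢.tree.adj.dist 𝒢.tree.root v = n
  induction n using Nat.strong_induction_on generalizing v with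
  | _ n ih =>
  by_cases hl : IsLeaf 𝒢.tree v
  · obtain ⟨g, hg⟩ := (𝒢.geneLeaf_range v).mp hl
    exact ⟨g, hg ▸ 𝒢.tree.anc_refl v⟩
  · have h2 := 𝒢.internal_children v hl
    have hne : (childSet 𝒢.tree v).Nonempty := by
      apply Set.nonempty_of_ncard_ne_zero; omega
    obtain ⟨c, hc⟩ := hne
    obtain ⟨hadj, hanc⟩ := hc
    have hvc : 𝒢.tree.adj.dist v c = 1 := (dist_eq_one_iff_adj).mpr hadj.symm
    have hd : 𝒢.tree.adj.dist 𝒢.tree.root c = 𝒢.tree.adj.dist 𝒢.tree.root v + 1 := by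
      unfold Anc at hanc; omega
    have hbound : 𝒢.tree.adj.dist 𝒢.tree.root c < Fintype.card VG₁ := by
      have := (𝒢.tree.geo_isPath 𝒢.tree.root c).length_lt
      rw [𝒢.tree.geo_length] at this
      exact this
    obtain ⟨g, hg⟩ := ih (Fintype.card VG₁ - 𝒢.tree.adj.dist 𝒢.tree.root c)
      (by omega) c rfl
    exact ⟨g, 𝒢.tree.anc_trans hanc hg⟩

/-- a spec node has no strict descendant with the same species -/
lemma spec_no_desc {a b : VG₁} (hspec : 𝒢.lbl a = Evt.spec) (hanc : Anc 𝒢.tree a b)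
    (hne : a ≠ b) (hμ : 𝒢.μ a = 𝒢.μ b) : False := by
  obtain ⟨c, hc, hcb, -⟩ := 𝒢.tree.anc_step hanc hne
  have hμc : 𝒢.μ c = 𝒢.μ a := by
    have h1 := 𝒢.time_consistent a c hc.2
    have h2 := 𝒢.time_consistent c b hcb
    rw [← hμ] at h2
    exact S.anc_antisymm h2 h1
  obtain ⟨-, htwo⟩ := 𝒢.spec_two_children a hspec
  -- find a second child
  have hcmem : c ∈ childSet 𝒢.tree a := hc
  have : ∃ c₂ ∈ childSet 𝒢.tree a, c₂ ≠ c := by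
    by_contra hcon
    push_neg at hcon
    have hsub : childSet 𝒢.tree a ⊆ {c} := fun x hx => hcon x hx
    have := Set.ncard_le_ncard hsub (Set.finite_singleton c)
    rw [Set.ncard_singleton] at this
    omega
  obtain ⟨c₂, hc₂, hc₂ne⟩ := this
  obtain ⟨s₁, s₂, hs₁, hs₂, hs₁₂, hor⟩ :=
    𝒢.spec_separates a hspec c c₂ hcmem hc₂ (fun h => hc₂ne h.symm)
  have : ∃ s, IsChild S s (𝒢.μ a) ∧ Anc S s (𝒢.μ c) := by
    rcases hor with ⟨h1, -⟩ | ⟨h1, -⟩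
    · exact ⟨s₁, hs₁, h1⟩
    · exact ⟨s₂, hs₂, h1⟩
  obtain ⟨s, hs, hsanc⟩ := this
  rw [hμc] at hsanc
  have : s = 𝒢.μ a := S.anc_antisymm hsanc hs.2
  exact S.adj.loopless.irrefl _ (this ▸ hs.1)

/-- chain of redundant edges between comparable dup nodes with equal species -/
lemma dup_chain : ∀ n {a b : VG₁}, 𝒢.tree.adj.dist a b = n → Anc 𝒢.tree a b →
    𝒢.μ a = 𝒢.μ b → 𝒢.lbl a = Evt.dup → 𝒢.lbl b = Evt.dup →
    Relation.EqvGen (RedundantAdj 𝒢) a b := by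
  intro n
  induction n using Nat.strong_induction_on with
  | _ n ih =>
  intro a b hn hanc hμ hla hlb
  by_cases hab : a = b
  · exact hab ▸ Relation.EqvGen.refl a
  · obtain ⟨c, hc, hcb, hdist⟩ := 𝒢.tree.anc_step hanc hab
    have hμc : 𝒢.μ c = 𝒢.μ a := by
      have h1 := 𝒢.time_consistent a c hc.2
      have h2 := 𝒢.time_consistent c b hcb
      rw [← hμ] at h2
      exact S.anc_antisymm h2 h1
    have hlc : 𝒢.lbl c = Evt.dup := by
      by_cases hcbeq : c = b
      · rw [hcbeq, hlb]
      · have hnl : ¬ IsLeaf 𝒢.tree c := by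
          intro hle
          exact hcbeq (leaf_anc_eq hle hcb).symm
        rcases 𝒢.internal_lbl c hnl with h | h
        · exact h
        · exact absurd (spec_no_desc 𝒢 h hcb hcbeq (hμc.trans hμ)) id
    have hred : RedundantEdge 𝒢 a c := ⟨hc, hμc.symm, hla, hlc⟩
    have step : Relation.EqvGen (RedundantAdj 𝒢) a c :=
      Relation.EqvGen.rel _ _ (Or.inl hred)
    exact Relation.EqvGen.trans _ _ _ step
      (ih (𝒢.tree.adj.dist c b) (by omega) rfl hcb (hμc.trans hμ) hlc hlb)

end ReconLemmas

section MapLemmas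
variable {Γ : Type*} {VS VG₁ VG₂ : Type*} [Fintype VS] [Fintype VG₁] [Fintype VG₂]
  {S : RTree VS}
variable {𝒢₁ : Recon Γ VG₁ VS S} {𝒢₂ : Recon Γ VG₂ VS S}

lemma gclade_leaf (g : Γ) : gclade 𝒢₁ (𝒢₁.geneLeaf g) = {g} := by
  ext g'
  simp only [gclade, Set.mem_setOf_eq, Set.mem_singleton_iff]
  constructor
  · intro h
    have hleaf : IsLeaf 𝒢₁.tree (𝒢₁.geneLeaf g) := (𝒢₁.geneLeaf_range _).mpr ⟨g, rfl⟩
    have := leaf_anc_eq hleaf h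
    exact 𝒢₁.geneLeaf_inj this
  · rintro rfl
    exact 𝒢₁.tree.anc_refl _

lemma lca_map_leaf {m : VG₁ → VG₂} (hm : IsLcaMap 𝒢₁ 𝒢₂ m) (g : Γ) :
    m (𝒢₁.geneLeaf g) = 𝒢₂.geneLeaf g := by
  have h := hm (𝒢₁.geneLeaf g)
  rw [gclade_leaf] at h
  obtain ⟨h1, h2⟩ := h
  have ha : Anc 𝒢₂.tree (m (𝒢₁.geneLeaf g)) (𝒢₂.geneLeaf g) :=
    h1 _ ⟨g, rfl, rfl⟩
  have hb : Anc 𝒢₂.tree (𝒢₂.geneLeaf g) (m (𝒢₁.geneLeaf g)) := by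
    apply h2
    rintro x ⟨g', hg', rfl⟩
    rcases hg' with rfl
    exact 𝒢₂.tree.anc_refl _
  exact (𝒢₂.tree.anc_antisymm ha hb)

lemma m_mono {m : VG₁ → VG₂} (hm : IsLcaMap 𝒢₁ 𝒢₂ m) {a b : VG₁}
    (h : Anc 𝒢₁.tree a b) : Anc 𝒢₂.tree (m a) (m b) := by
  apply (hm b).2
  rintro x ⟨g, hg, rfl⟩
  exact (hm a).1 _ ⟨g, 𝒢₁.tree.anc_trans h hg, rfl⟩

/-- bundle of the zero-distance conditions -/
structure ZeroHyp (𝒢₁ : Recon Γ VG₁ VS S) (𝒢₂ : Recon Γ VG₂ VS S)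
    (m₁₂ : VG₁ → VG₂) (m₂₁ : VG₂ → VG₁) : Prop where
  hm₁₂ : IsLcaMap 𝒢₁ 𝒢₂ m₁₂
  hm₂₁ : IsLcaMap 𝒢₂ 𝒢₁ m₂₁
  hμ₁₂ : ∀ v, 𝒢₁.μ v = 𝒢₂.μ (m₁₂ v)
  hμ₂₁ : ∀ v, 𝒢₂.μ v = 𝒢₁.μ (m₂₁ v)
  hl₁₂ : ∀ v, 𝒢₁.lbl v = 𝒢₂.lbl (m₁₂ v)
  hl₂₁ : ∀ v, 𝒢₂.lbl v = 𝒢₁.lbl (m₂₁ v)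

lemma m_roundtrip {m₁₂ : VG₁ → VG₂} {m₂₁ : VG₂ → VG₁} (H : ZeroHyp 𝒢₁ 𝒢₂ m₁₂ m₂₁)
    (v : VG₁) : Relation.EqvGen (RedundantAdj 𝒢₁) (m₂₁ (m₁₂ v)) v := by
  set v' := m₂₁ (m₁₂ v) with hv'
  have hμ : 𝒢₁.μ v' = 𝒢₁.μ v := by
    rw [hv', ← H.hμ₂₁ (m₁₂ v), ← H.hμ₁₂ v]
  have hlbl : 𝒢₁.lbl v' = 𝒢₁.lbl v := by
    rw [hv', ← H.hl₂₁ (m₁₂ v), ← H.hl₁₂ v]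
  obtain ⟨g, hg⟩ := leaf_desc 𝒢₁ v
  have h2 : Anc 𝒢₂.tree (m₁₂ v) (𝒢₂.geneLeaf g) := (H.hm₁₂ v).1 _ ⟨g, hg, rfl⟩
  have h3 : Anc 𝒢₁.tree v' (𝒢₁.geneLeaf g) := (H.hm₂₁ (m₁₂ v)).1 _ ⟨g, h2, rfl⟩
  have hcomp := 𝒢₁.tree.anc_comp hg h3
  rcases hEvt : 𝒢₁.lbl v with hext | hext | hext
  case dup =>
    have hlv' : 𝒢₁.lbl v' = Evt.dup := by rw [hlbl, hEvt]
    rcases hcomp with h | h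
    · exact Relation.EqvGen.symm _ _ (dup_chain 𝒢₁ _ rfl h hμ.symm hEvt hlv')
    · exact dup_chain 𝒢₁ _ rfl h hμ hlv' hEvt
  case spec =>
    by_cases heq : v' = v
    · rw [heq]; exact Relation.EqvGen.refl v
    · exfalso
      have hlv' : 𝒢₁.lbl v' = Evt.spec := by rw [hlbl, hEvt]
      rcases hcomp with h | h
      · exact spec_no_desc 𝒢₁ hEvt h (fun he => heq he.symm) hμ.symm
      · exact spec_no_desc 𝒢₁ hlv' h heq hμ
  case extant =>
    have hleaf : IsLeaf 𝒢₁.tree v := by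
      by_contra hnl
      rcases 𝒢₁.internal_lbl v hnl with h | h <;> rw [hEvt] at h <;> exact Evt.noConfusion h
    obtain ⟨g₀, hg₀⟩ := (𝒢₁.geneLeaf_range v).mp hleaf
    have : v' = v := by
      rw [hv', ← hg₀, lca_map_leaf H.hm₁₂, lca_map_leaf H.hm₂₁]
    rw [this]; exact Relation.EqvGen.refl v

lemma redadj_symm : ∀ a b, RedundantAdj 𝒢₁ a b → RedundantAdj 𝒢₁ b a := by
  intro a b h
  rcases h with h | h
  · exact Or.inr h
  · exact Or.inl h

lemma redadj_adj : ∀ a b, RedundantAdj 𝒢₁ a b → 𝒢₁.tree.adj.Adj a b := by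
  intro a b h
  rcases h with ⟨⟨h, -⟩, -⟩ | ⟨⟨h, -⟩, -⟩
  · exact h.symm
  · exact h

lemma m_red {m₁₂ : VG₁ → VG₂} {m₂₁ : VG₂ → VG₁} (H : ZeroHyp 𝒢₁ 𝒢₂ m₁₂ m₂₁)
    {a b : VG₁} (h : RedundantAdj 𝒢₁ a b) :
    Relation.EqvGen (RedundantAdj 𝒢₂) (m₁₂ a) (m₁₂ b) := by
  have key : ∀ p q : VG₁, RedundantEdge 𝒢₁ p q →
      Relation.EqvGen (RedundantAdj 𝒢₂) (m₁₂ p) (m₁₂ q) := by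
    rintro p q ⟨hch, hμ, hlp, hlq⟩
    have hanc : Anc 𝒢₂.tree (m₁₂ p) (m₁₂ q) := m_mono H.hm₁₂ hch.2
    have hμ2 : 𝒢₂.μ (m₁₂ p) = 𝒢₂.μ (m₁₂ q) := by
      rw [← H.hμ₁₂ p, ← H.hμ₁₂ q]; exact hμ
    have hlp2 : 𝒢₂.lbl (m₁₂ p) = Evt.dup := by rw [← H.hl₁₂ p]; exact hlp
    have hlq2 : 𝒢₂.lbl (m₁₂ q) = Evt.dup := by rw [← H.hl₁₂ q]; exact hlq
    exact dup_chain 𝒢₂ _ rfl hanc hμ2 hlp2 hlq2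
  rcases h with h | h
  · exact key a b h
  · exact Relation.EqvGen.symm _ _ (key b a h)

lemma m_red_ext {m₁₂ : VG₁ → VG₂} {m₂₁ : VG₂ → VG₁} (H : ZeroHyp 𝒢₁ 𝒢₂ m₁₂ m₂₁)
    {a b : VG₁} (h : Relation.EqvGen (RedundantAdj 𝒢₁) a b) :
    Relation.EqvGen (RedundantAdj 𝒢₂) (m₁₂ a) (m₁₂ b) := by
  induction h with
  | rel x y hr => exact m_red H hr
  | refl x => exact Relation.EqvGen.refl _
  | symm x y _ ih => exact Relation.EqvGen.symm _ _ ih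
  | trans x y z _ _ ih1 ih2 => exact Relation.EqvGen.trans _ _ _ ih1 ih2

end MapLemmas

section MainIso
variable {Γ : Type*} {VS VG₁ VG₂ : Type*} [Fintype VS] [Fintype VG₁] [Fintype VG₂]
  {S : RTree VS}
variable {𝒢₁ : Recon Γ VG₁ VS S} {𝒢₂ : Recon Γ VG₂ VS S}

lemma ZeroHyp.symm {m₁₂ : VG₁ → VG₂} {m₂₁ : VG₂ → VG₁} (H : ZeroHyp 𝒢₁ 𝒢₂ m₁₂ m₂₁) :
    ZeroHyp 𝒢₂ 𝒢₁ m₂₁ m₁₂ := ⟨H.hm₂₁, H.hm₁₂, H.hμ₂₁, H.hμ₁₂, H.hl₂₁, H.hl₁₂⟩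

lemma chyp_of_lr {VG₁' : Type*} [Fintype VG₁'] {L₁ : Recon Γ VG₁' VS S}
    {φ₁ : VG₁ → VG₁'} (hφ₁ : IsLROf 𝒢₁ L₁ φ₁) :
    CHyp 𝒢₁.tree L₁.tree (RedundantAdj 𝒢₁) φ₁ :=
  ⟨redadj_symm, redadj_adj, hφ₁.2.1, hφ₁.2.2.1, hφ₁.2.2.2.1⟩

lemma main_iso {VG₁' VG₂' : Type*} [Fintype VG₁'] [Fintype VG₂']
    {L₁ : Recon Γ VG₁' VS S} {L₂ : Recon Γ VG₂' VS S}
    {m₁₂ : VG₁ → VG₂} {m₂₁ : VG₂ → VG₁} (H : ZeroHyp 𝒢₁ 𝒢₂ m₁₂ m₂₁)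
    {φ₁ : VG₁ → VG₁'} (hφ₁ : IsLROf 𝒢₁ L₁ φ₁)
    {φ₂ : VG₂ → VG₂'} (hφ₂ : IsLROf 𝒢₂ L₂ φ₂) : ReconIso L₁ L₂ := by
  obtain ⟨hsurj₁, hker₁, hadj₁, hroot₁, hgl₁, hμL₁, hlbl₁⟩ := hφ₁
  obtain ⟨hsurj₂, hker₂, hadj₂, hroot₂, hgl₂, hμL₂, hlbl₂⟩ := hφ₂
  have C₁ : CHyp 𝒢₁.tree L₁.tree (RedundantAdj 𝒢₁) φ₁ :=
    ⟨redadj_symm, redadj_adj, hker₁, hadj₁, hroot₁⟩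
  have C₂ : CHyp 𝒢₂.tree L₂.tree (RedundantAdj 𝒢₂) φ₂ :=
    ⟨redadj_symm, redadj_adj, hker₂, hadj₂, hroot₂⟩
  set ψ : VG₁' → VG₂' := fun x => φ₂ (m₁₂ (Function.surjInv hsurj₁ x)) with hψdef
  set χ : VG₂' → VG₁' := fun y => φ₁ (m₂₁ (Function.surjInv hsurj₂ y)) with hχdef
  have hψφ : ∀ a, ψ (φ₁ a) = φ₂ (m₁₂ a) := by
    intro a
    apply (hker₂ _ _).mpr
    apply m_red_ext H
    exact (hker₁ _ _).mp (Function.surjInv_eq hsurj₁ (φ₁ a))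
  have hχφ : ∀ b, χ (φ₂ b) = φ₁ (m₂₁ b) := by
    intro b
    apply (hker₁ _ _).mpr
    apply m_red_ext H.symm
    exact (hker₂ _ _).mp (Function.surjInv_eq hsurj₂ (φ₂ b))
  have hleft : Function.LeftInverse χ ψ := by
    intro x
    obtain ⟨a, rfl⟩ := hsurj₁ x
    rw [hψφ, hχφ]
    exact (hker₁ _ _).mpr (m_roundtrip H a)
  have hright : Function.RightInverse χ ψ := by
    intro y
    obtain ⟨b, rfl⟩ := hsurj₂ y
    rw [hχφ, hψφ]
    exact (hker₂ _ _).mpr (m_roundtrip H.symm b)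
  set e : VG₁' ≃ VG₂' := ⟨ψ, χ, hleft, hright⟩ with hedef
  have hAncψ : ∀ x y, Anc L₁.tree x y → Anc L₂.tree (ψ x) (ψ y) := by
    intro x y h
    obtain ⟨a, rfl⟩ := hsurj₁ x
    obtain ⟨b, rfl⟩ := hsurj₁ y
    obtain ⟨a', ha', hanc'⟩ := anc_pull C₁ h
    have h2 : Anc 𝒢₂.tree (m₁₂ a') (m₁₂ b) := m_mono H.hm₁₂ hanc'
    have h3 : Anc L₂.tree (φ₂ (m₁₂ a')) (φ₂ (m₁₂ b)) := anc_push C₂ h2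
    have h4 : φ₂ (m₁₂ a') = φ₂ (m₁₂ a) :=
      (hker₂ _ _).mpr (m_red_ext H (Relation.EqvGen.symm _ _ ha'))
    rw [hψφ, hψφ]
    rw [h4] at h3
    exact h3
  have hAncχ : ∀ x y, Anc L₂.tree x y → Anc L₁.tree (χ x) (χ y) := by
    intro x y h
    obtain ⟨a, rfl⟩ := hsurj₂ x
    obtain ⟨b, rfl⟩ := hsurj₂ y
    obtain ⟨a', ha', hanc'⟩ := anc_pull C₂ h
    have h2 : Anc 𝒢₁.tree (m₂₁ a') (m₂₁ b) := m_mono H.hm₂₁ hanc'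
    have h3 : Anc L₁.tree (φ₁ (m₂₁ a')) (φ₁ (m₂₁ b)) := anc_push C₁ h2
    have h4 : φ₁ (m₂₁ a') = φ₁ (m₂₁ a) :=
      (hker₁ _ _).mpr (m_red_ext H.symm (Relation.EqvGen.symm _ _ ha'))
    rw [hχφ, hχφ]
    rw [h4] at h3
    exact h3
  have hinj : Function.Injective ψ := hleft.injective
  have hcov : ∀ x y, IsChild L₁.tree y x → IsChild L₂.tree (ψ y) (ψ x) := by
    intro x y h
    rw [child_iff_cov] at h ⊢
    obtain ⟨hanc, hne, hmin⟩ := h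
    refine ⟨hAncψ _ _ hanc, fun he => hne (hinj he), fun z hz1 hz2 => ?_⟩
    have hz : ψ (χ z) = z := hright z
    have h1 : Anc L₁.tree x (χ z) := by
      have := hAncχ _ _ hz1
      rw [hleft x] at this
      exact this
    have h2 : Anc L₁.tree (χ z) y := by
      have := hAncχ _ _ hz2
      rw [hleft y] at this
      exact this
    rcases hmin _ h1 h2 with h | h
    · left; rw [← hz, h]
    · right; rw [← hz, h]
  have hcov' : ∀ x y, IsChild L₂.tree y x → IsChild L₁.tree (χ y) (χ x) := by
    intro x y h
    rw [child_iff_cov] at h ⊢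
    obtain ⟨hanc, hne, hmin⟩ := h
    refine ⟨hAncχ _ _ hanc, fun he => hne (hright.injective he), fun z hz1 hz2 => ?_⟩
    have hz : χ (ψ z) = z := hleft z
    have h1 : Anc L₂.tree x (ψ z) := by
      have := hAncψ _ _ hz1
      rw [hright x] at this
      exact this
    have h2 : Anc L₂.tree (ψ z) y := by
      have := hAncψ _ _ hz2
      rw [hright y] at this
      exact this
    rcases hmin _ h1 h2 with h | h
    · left; rw [← hz, h]
    · right; rw [← hz, h]
  refine ⟨e, ?_, ?_, ?_, ?_⟩
  · intro g
    show ψ (L₁.geneLeaf g) = L₂.geneLeaf g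
    rw [hgl₁ g, hψφ, lca_map_leaf H.hm₁₂, ← hgl₂]
  · intro a b
    show L₂.tree.adj.Adj (ψ a) (ψ b) ↔ L₁.tree.adj.Adj a b
    rw [adj_iff_children, adj_iff_children]
    constructor
    · rintro (h | h)
      · have := hcov' _ _ h
        rw [hleft a, hleft b] at this
        exact Or.inl this
      · have := hcov' _ _ h
        rw [hleft a, hleft b] at this
        exact Or.inr this
    · rintro (h | h)
      · exact Or.inl (hcov _ _ h)
      · exact Or.inr (hcov _ _ h)
  · intro v
    show L₂.μ (ψ v) = L₁.μ v
    obtain ⟨a, rfl⟩ := hsurj₁ v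
    rw [hψφ, hμL₂, hμL₁, H.hμ₁₂]
  · intro v
    show L₂.lbl (ψ v) = L₁.lbl v
    obtain ⟨a, rfl⟩ := hsurj₁ v
    rw [hψφ, hlbl₂, hlbl₁, H.hl₁₂]

end MainIso

/-- positivity of PLR under `≄_d` for `α ∈ (0,1)`. -/
theorem stmt5 {VG₁' VG₂' : Type*} [Fintype VG₁'] [Fintype VG₂']
    (hS : IsSpeciesTree S)
    (𝒢₁ : Recon Γ VG₁ VS S) (𝒢₂ : Recon Γ VG₂ VS S)
    (L₁ : Recon Γ VG₁' VS S) (L₂ : Recon Γ VG₂' VS S)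
    (α : ℝ) (hα₀ : 0 < α) (hα₁ : α < 1)
    (hcomp : Comparable 𝒢₁ 𝒢₂)
    (φ₁ : VG₁ → VG₁') (hφ₁ : IsLROf 𝒢₁ L₁ φ₁)
    (φ₂ : VG₂ → VG₂') (hφ₂ : IsLROf 𝒢₂ L₂ φ₂)
    (hniso : ¬ ReconIso L₁ L₂)
    (m₁₂ : VG₁ → VG₂) (m₂₁ : VG₂ → VG₁)
    (hm₁₂ : IsLcaMap 𝒢₁ 𝒢₂ m₁₂) (hm₂₁ : IsLcaMap 𝒢₂ 𝒢₁ m₂₁) :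
    0 < PLR α 𝒢₁ 𝒢₂ m₁₂ m₂₁ := by
  by_contra hnpos
  push_neg at hnpos
  have h1α : (0:ℝ) < 1 - α := by linarith
  have hA : (0:ℝ) ≤ (dPath 𝒢₁ 𝒢₂ m₁₂ : ℝ) := Nat.cast_nonneg _
  have hB : (0:ℝ) ≤ (dLbl 𝒢₁ 𝒢₂ m₁₂ : ℝ) := Nat.cast_nonneg _
  have hC : (0:ℝ) ≤ (dPath 𝒢₂ 𝒢₁ m₂₁ : ℝ) := Nat.cast_nonneg _
  have hD : (0:ℝ) ≤ (dLbl 𝒢₂ 𝒢₁ m₂₁ : ℝ) := Nat.cast_nonneg _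
  have t1 : 0 ≤ α * (dPath 𝒢₁ 𝒢₂ m₁₂ : ℝ) := mul_nonneg hα₀.le hA
  have t2 : 0 ≤ (1 - α) * (dLbl 𝒢₁ 𝒢₂ m₁₂ : ℝ) := mul_nonneg h1α.le hB
  have t3 : 0 ≤ α * (dPath 𝒢₂ 𝒢₁ m₂₁ : ℝ) := mul_nonneg hα₀.le hC
  have t4 : 0 ≤ (1 - α) * (dLbl 𝒢₂ 𝒢₁ m₂₁ : ℝ) := mul_nonneg h1α.le hD
  unfold PLR dAsym at hnpos
  have e1 : α * (dPath 𝒢₁ 𝒢₂ m₁₂ : ℝ) = 0 := by linarith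
  have e2 : (1 - α) * (dLbl 𝒢₁ 𝒢₂ m₁₂ : ℝ) = 0 := by linarith
  have e3 : α * (dPath 𝒢₂ 𝒢₁ m₂₁ : ℝ) = 0 := by linarith
  have e4 : (1 - α) * (dLbl 𝒢₂ 𝒢₁ m₂₁ : ℝ) = 0 := by linarith
  have hA0 : dPath 𝒢₁ 𝒢₂ m₁₂ = 0 :=
    Nat.cast_eq_zero.mp ((mul_eq_zero.mp e1).resolve_left (ne_of_gt hα₀))
  have hB0 : dLbl 𝒢₁ 𝒢₂ m₁₂ = 0 :=
    Nat.cast_eq_zero.mp ((mul_eq_zero.mp e2).resolve_left (ne_of_gt h1α))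
  have hC0 : dPath 𝒢₂ 𝒢₁ m₂₁ = 0 :=
    Nat.cast_eq_zero.mp ((mul_eq_zero.mp e3).resolve_left (ne_of_gt hα₀))
  have hD0 : dLbl 𝒢₂ 𝒢₁ m₂₁ = 0 :=
    Nat.cast_eq_zero.mp ((mul_eq_zero.mp e4).resolve_left (ne_of_gt h1α))
  unfold dPath at hA0 hC0
  unfold dLbl at hB0 hD0
  have hμ12 : ∀ v, 𝒢₁.μ v = 𝒢₂.μ (m₁₂ v) := by
    intro v
    exact S.dz (Finset.sum_eq_zero_iff.mp hA0 v (Finset.mem_univ v))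
  have hμ21 : ∀ v, 𝒢₂.μ v = 𝒢₁.μ (m₂₁ v) := by
    intro v
    exact S.dz (Finset.sum_eq_zero_iff.mp hC0 v (Finset.mem_univ v))
  have hl12 : ∀ v, 𝒢₁.lbl v = 𝒢₂.lbl (m₁₂ v) := by
    intro v
    by_contra hne
    have hv : v ∈ {v : VG₁ | 𝒢₁.lbl v ≠ 𝒢₂.lbl (m₁₂ v)} := hne
    rw [(Set.ncard_eq_zero (Set.toFinite _)).mp hB0] at hv
    exact hv
  have hl21 : ∀ v, 𝒢₂.lbl v = 𝒢₁.lbl (m₂₁ v) := by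
    intro v
    by_contra hne
    have hv : v ∈ {v : VG₂ | 𝒢₂.lbl v ≠ 𝒢₁.lbl (m₂₁ v)} := hne
    rw [(Set.ncard_eq_zero (Set.toFinite _)).mp hD0] at hv
    exact hv
  have H : ZeroHyp 𝒢₁ 𝒢₂ m₁₂ m₂₁ := ⟨hm₁₂, hm₂₁, hμ12, hμ21, hl12, hl21⟩
  exact hniso (main_iso H hφ₁ hφ₂)
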